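/- Let A ⊆ ℝ^m be a nonempty compact set such that for every x ∈ ∂A there exists a with x ∈ B(a, r) ⊆ A (a ball of radius r rolls freely in A), and let π : ℝ^m → ℝ^n be the projection onto the first n coordinates (n ≤ m). Then for every y ∈ ∂π(A) there exists b ∈ ℝ^n with y ∈ B(b, r) ⊆ π(A). -/

import Mathlib

open Metric

/-- Sums over `Fin m` reduce to sums over `Fin n` when the tail vanishes. -/
lemma aux_sum_eq {m n : ℕ} (hnm : n ≤ m) (f : Fin m → ℝ)
    (hf : ∀ j : Fin m, n ≤ (j : ℕ) → f j = 0) :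
    ∑ j : Fin m, f j = ∑ i : Fin n, f (Fin.castLE hnm i) := by
  set F : ℕ → ℝ := fun j => if h : j < m then f ⟨j, h⟩ else 0 with hF
  have h1 : ∑ j : Fin m, f j = ∑ j ∈ Finset.range m, F j := by
    rw [← Fin.sum_univ_eq_sum_range]
    refine Finset.sum_congr rfl fun j _ => ?_
    simp [hF, j.isLt]
  have h2 : ∑ j ∈ Finset.range m, F j = ∑ j ∈ Finset.range n, F j := by
    refine (Finset.sum_subset (Finset.range_subset_range.2 hnm) fun j hj hj' => ?_).symm
    simp only [Finset.mem_range] at hj hj'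
    simp only [hF, dif_pos hj]
    exact hf ⟨j, hj⟩ (le_of_not_gt hj')
  have h3 : ∑ j ∈ Finset.range n, F j = ∑ i : Fin n, f (Fin.castLE hnm i) := by
    rw [← Fin.sum_univ_eq_sum_range]
    refine Finset.sum_congr rfl fun i _ => ?_
    simp only [hF, dif_pos (lt_of_lt_of_le i.isLt hnm)]
    rfl
  rw [h1, h2, h3]

lemma aux_sum_le {m n : ℕ} (hnm : n ≤ m) (f : Fin m → ℝ) (hf : ∀ j, 0 ≤ f j) :
    ∑ i : Fin n, f (Fin.castLE hnm i) ≤ ∑ j : Fin m, f j := by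
  set F : ℕ → ℝ := fun j => if h : j < m then f ⟨j, h⟩ else 0 with hF
  have h1 : ∑ j : Fin m, f j = ∑ j ∈ Finset.range m, F j := by
    rw [← Fin.sum_univ_eq_sum_range]
    refine Finset.sum_congr rfl fun j _ => ?_
    simp [hF, j.isLt]
  have h3 : ∑ j ∈ Finset.range n, F j = ∑ i : Fin n, f (Fin.castLE hnm i) := by
    rw [← Fin.sum_univ_eq_sum_range]
    refine Finset.sum_congr rfl fun i _ => ?_
    simp only [hF, dif_pos (lt_of_lt_of_le i.isLt hnm)]
    rfl
  rw [h1, ← h3]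
  refine Finset.sum_le_sum_of_subset_of_nonneg (Finset.range_subset_range.2 hnm) fun j _ _ => ?_
  by_cases h : j < m <;> simp [hF, h, hf]

/-- If a ball of radius `r` rolls freely inside a nonempty compact set `A ⊆ ℝ^m` and
`π : ℝ^m → ℝ^n` is the projection onto the first `n ≤ m` coordinates, then a ball of
radius `r` rolls freely inside `π(A)`. -/
theorem stmt7 (m n : ℕ) (hnm : n ≤ m) (r : ℝ) (hr : 0 < r)
    (A : Set (EuclideanSpace ℝ (Fin m))) (hAne : A.Nonempty) (hAc : IsCompact A)
    (hroll : ∀ x ∈ frontier A, ∃ a, x ∈ closedBall a r ∧ closedBall a r ⊆ A)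
    (π : EuclideanSpace ℝ (Fin m) → EuclideanSpace ℝ (Fin n))
    (hπ : ∀ x i, π x i = x (Fin.castLE hnm i)) :
    ∀ y ∈ frontier (π '' A), ∃ b, y ∈ closedBall b r ∧ closedBall b r ⊆ π '' A := by
  -- π is 1-Lipschitz
  have hlip : ∀ x a : EuclideanSpace ℝ (Fin m), dist (π x) (π a) ≤ dist x a := by
    intro x a
    rw [EuclideanSpace.dist_eq, EuclideanSpace.dist_eq]
    apply Real.sqrt_le_sqrt
    have := aux_sum_le hnm (fun j => dist (x j) (a j) ^ 2) (fun j => sq_nonneg _)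
    refine le_trans (le_of_eq ?_) this
    exact Finset.sum_congr rfl fun i _ => by rw [hπ, hπ]
  -- lifting points of the target space with exact distance
  have key : ∀ (a : EuclideanSpace ℝ (Fin m)) (z : EuclideanSpace ℝ (Fin n)),
      ∃ x, π x = z ∧ dist x a = dist z (π a) := by
    intro a z
    set x : EuclideanSpace ℝ (Fin m) :=
      WithLp.toLp 2 (fun j => if h : (j : ℕ) < n then z ⟨j, h⟩ else a j : Fin m → ℝ) with hxdef
    have hx : ∀ i : Fin n, x (Fin.castLE hnm i) = z i := by
      intro i
      show dite _ _ _ = _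
      rw [dif_pos (show ((Fin.castLE hnm i : Fin m) : ℕ) < n from i.isLt)]
      exact congrArg z (Fin.ext rfl)
    refine ⟨x, PiLp.ext fun i => (hπ x i).trans (hx i), ?_⟩
    rw [EuclideanSpace.dist_eq, EuclideanSpace.dist_eq]
    congr 1
    rw [aux_sum_eq hnm _ (fun j hj => by
      show dist (dite _ _ _) _ ^ 2 = 0
      rw [dif_neg (not_lt.2 hj), dist_self]
      norm_num)]
    refine Finset.sum_congr rfl fun i _ => ?_
    rw [hx i, hπ]
  -- π is continuous
  have hπeq : π = fun x => WithLp.toLp 2 (fun i => x (Fin.castLE hnm i) : Fin n → ℝ) := by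
    funext x; exact PiLp.ext fun i => hπ x i
  have hcont : Continuous π :=
    LipschitzWith.continuous (K := 1) (fun x a => by
      simpa [edist_dist] using ENNReal.ofReal_le_ofReal (hlip x a))
  -- π is an open map
  have hopen : IsOpenMap π := by
    intro U hU
    rw [Metric.isOpen_iff]
    rintro _ ⟨x, hx, rfl⟩
    obtain ⟨ε, hε, hball⟩ := Metric.isOpen_iff.1 hU x hx
    refine ⟨ε, hε, fun z hz => ?_⟩
    obtain ⟨x', hx', hd⟩ := key x z
    exact ⟨x', hball (by rw [mem_ball, hd]; exact hz), hx'⟩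
  -- main argument
  intro y hy
  have hclosed : IsClosed (π '' A) := (hAc.image hcont).isClosed
  have hyA : y ∈ π '' A := hclosed.closure_eq ▸ frontier_subset_closure hy
  obtain ⟨x, hxA, hxy⟩ := hyA
  have hxint : x ∉ interior A := by
    intro hx
    have : y ∈ interior (π '' A) :=
      interior_maximal (Set.image_mono interior_subset) (hopen _ isOpen_interior)
        ⟨x, hx, hxy⟩
    exact hy.2 this
  have hxf : x ∈ frontier A := ⟨subset_closure hxA, hxint⟩
  obtain ⟨a, hxa, haA⟩ := hroll x hxf
  refine ⟨π a, ?_, ?_⟩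
  · rw [mem_closedBall, ← hxy]
    exact le_trans (hlip x a) (mem_closedBall.1 hxa)
  · intro z hz
    obtain ⟨x', hx', hd⟩ := key a z
    exact ⟨x', haA (by rw [mem_closedBall, hd]; exact mem_closedBall.1 hz), hx'⟩
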